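/- Let E = E(n,𝒟) be a d-dimensional fractal cube and let E_k = ([0,1]^d + 𝒟_k)/n^k be its k-th approximation, where 𝒟_k = 𝒟 + n𝒟 + ⋯ + n^{k−1}𝒟. If for some k > 0 the set E_k has a connected component U with U ∩ ∂[0,1]^d = ∅ (a k-th island), then E has a trivial point. -/

import Mathlib

open Set

/-- The unit cube `[0,1]^d`. -/
def unitCube (d : ℕ) : Set (Fin d → ℝ) := {x | ∀ j, x j ∈ Icc (0:ℝ) 1}

/-- digit vector of a word -/
def cvec {d N : ℕ} (n : ℕ) (D : Fin N → (Fin d → ℝ)) : List (Fin N) → (Fin d → ℝ)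
  | [] => 0
  | j :: τ => cvec n D τ + (n : ℝ) ^ τ.length • D j

/-- `m`-fold repetition of a word -/
def wordIter {N : ℕ} (σ : List (Fin N)) : ℕ → List (Fin N)
  | 0 => []
  | m + 1 => σ ++ wordIter σ m

lemma exists_isClopen_subset_of_cc_subset {α : Type*} [TopologicalSpace α]
    [T2Space α] [CompactSpace α] {x : α} {O : Set α} (hO : IsOpen O)
    (h : connectedComponent x ⊆ O) :
    ∃ V : Set α, IsClopen V ∧ x ∈ V ∧ V ⊆ O := by
  have hcc := connectedComponent_eq_iInter_isClopen x
  have hcov : Oᶜ ⊆ ⋃ (Z : {Z : Set α // IsClopen Z ∧ x ∈ Z}), (Z : Set α)ᶜ := by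
    intro y hy
    by_contra hy'
    simp only [mem_iUnion, mem_compl_iff, not_exists, not_not] at hy'
    have hyc : y ∈ connectedComponent x := by
      rw [hcc]; exact mem_iInter.2 fun Z => hy' Z
    exact hy (h hyc)
  have hOc : IsCompact Oᶜ := hO.isClosed_compl.isCompact
  obtain ⟨t, ht⟩ := hOc.elim_finite_subcover _
    (fun Z : {Z : Set α // IsClopen Z ∧ x ∈ Z} => Z.2.1.isClosed.isOpen_compl) hcov
  refine ⟨⋂ Z ∈ t, (Z : Set α), isClopen_biInter_finset (fun Z _ => Z.2.1), ?_, ?_⟩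
  · exact mem_iInter₂.2 fun Z _ => Z.2.2
  · intro y hy
    by_contra hyO
    obtain ⟨Z, hZt, hZ⟩ := mem_iUnion₂.1 (ht hyO)
    exact hZ (mem_iInter₂.1 hy Z hZt)

theorem island_implies_trivial_point
    (d n N : ℕ) (hn : 2 ≤ n)
    (D : Fin N → (Fin d → ℝ))
    (hD : ∀ j i, ∃ m : ℕ, m < n ∧ D j i = (m : ℝ))
    (φ : Fin N → (Fin d → ℝ) → (Fin d → ℝ))
    (hφ : ∀ j x, φ j x = (n : ℝ)⁻¹ • (x + D j))
    (E : Set (Fin d → ℝ)) (hEne : E.Nonempty) (hEc : IsCompact E)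
    (hE : E = ⋃ j, φ j '' E)
    -- the `k`-th approximations
    (Eapprox : ℕ → Set (Fin d → ℝ))
    (hEapprox : ∀ k, Eapprox k =
      ⋃ (σ : List (Fin N)) (_ : σ.length = k),
        (σ.foldr (fun j f => φ j ∘ f) id) '' unitCube d)
    -- a `k`-th island for some `k > 0`
    (k : ℕ) (hk : 0 < k) (U : Set (Fin d → ℝ))
    (hUcomp : ∃ x ∈ Eapprox k, U = connectedComponentIn (Eapprox k) x)
    (hUisland : U ∩ frontier (unitCube d) = ∅) :
    ∃ x ∈ E, connectedComponentIn E x = {x} := by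
  classical
  set Q := unitCube d with hQdef
  set L : List (Fin N) → (Fin d → ℝ) → (Fin d → ℝ) :=
    fun σ => σ.foldr (fun j f => φ j ∘ f) id with hLdef
  have hn1 : (1:ℝ) < (n:ℝ) := by exact_mod_cast lt_of_lt_of_le one_lt_two hn
  have hn0 : (0:ℝ) < (n:ℝ) := lt_trans one_pos hn1
  -- cube facts
  have hQpi : Q = Set.pi univ (fun _ : Fin d => Icc (0:ℝ) 1) := by
    ext x
    constructor
    · intro h i _; exact h i
    · intro h i; exact h i (mem_univ i)
  have hQclosed : IsClosed Q := by
    rw [hQpi]; exact isClosed_set_pi (fun i _ => isClosed_Icc)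
  have hQcomp : IsCompact Q := by
    rw [hQpi]; exact isCompact_univ_pi (fun i => isCompact_Icc)
  have hQint : ∀ x, x ∈ interior Q ↔ ∀ j, x j ∈ Ioo (0:ℝ) 1 := by
    intro x
    rw [hQpi, interior_pi_set finite_univ]
    simp [Set.mem_pi, interior_Icc]
  have hQpc : IsPreconnected Q := by
    rw [hQpi]
    exact (convex_pi (fun i _ => convex_Icc (0:ℝ) 1)).isPreconnected
  -- affine formula for L
  have hL : ∀ (σ : List (Fin N)) x, L σ x = ((n:ℝ) ^ σ.length)⁻¹ • (x + cvec n D σ) := by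
    intro σ
    induction σ with
    | nil => intro x; simp [hLdef, cvec]
    | cons j τ ih =>
      intro x
      have h1 : L (j :: τ) x = φ j (L τ x) := rfl
      rw [h1, ih, hφ, cvec]
      have hpow : ((n:ℝ)) ^ τ.length ≠ 0 := by positivity
      have hne : (n:ℝ) ≠ 0 := ne_of_gt hn0
      simp only [List.length_cons, pow_succ]
      match_scalars <;> field_simp <;> ring
  -- digits are natural numbers
  have hcnat : ∀ (σ : List (Fin N)) i, ∃ m : ℕ, cvec n D σ i = (m:ℝ) ∧ m < n ^ σ.length := by
    intro σ
    induction σ with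
    | nil => intro i; exact ⟨0, by simp [cvec], by simp⟩
    | cons j τ ih =>
      intro i
      obtain ⟨m1, h1, h1'⟩ := ih i
      obtain ⟨m2, h2, h2'⟩ := hD j i
      refine ⟨m1 + n ^ τ.length * m2, ?_, ?_⟩
      · simp only [cvec, Pi.add_apply, Pi.smul_apply, smul_eq_mul, h1, h2']
        push_cast; ring
      · simp only [List.length_cons, pow_succ]
        calc m1 + n ^ τ.length * m2 < n ^ τ.length + n ^ τ.length * m2 := by omega
          _ = n ^ τ.length * (m2 + 1) := by ring
          _ ≤ n ^ τ.length * n := Nat.mul_le_mul_left _ (by omega)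
  -- L of append
  have hLapp : ∀ (σ τ : List (Fin N)) x, L (σ ++ τ) x = L σ (L τ x) := by
    intro σ τ x
    induction σ with
    | nil => rfl
    | cons j ρ ih => simp only [List.cons_append]; exact congrArg (φ j) ih
  -- L maps Q into Q
  have hLQ : ∀ (σ : List (Fin N)) y, y ∈ Q → L σ y ∈ Q := by
    intro σ y hy i
    rw [hL]
    obtain ⟨m, hm, hm'⟩ := hcnat σ i
    have hyi := hy i
    have hpow : (0:ℝ) < (n:ℝ) ^ σ.length := by positivity
    have hmle : (m:ℝ) + 1 ≤ (n:ℝ) ^ σ.length := by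
      have : ((m + 1 : ℕ) : ℝ) ≤ ((n ^ σ.length : ℕ) : ℝ) := by exact_mod_cast hm'
      push_cast at this; linarith
    simp only [Pi.smul_apply, Pi.add_apply, smul_eq_mul, hm]
    constructor
    · have : (0:ℝ) ≤ y i + m := by
        have := hyi.1; positivity
      positivity
    · rw [← inv_mul_cancel₀ (ne_of_gt hpow)]
      apply mul_le_mul_of_nonneg_left _ (by positivity)
      have := hyi.2; linarith
  -- continuity and openness of L
  have hLfun : ∀ σ : List (Fin N),
      L σ = fun x => ((n:ℝ) ^ σ.length)⁻¹ • (x + cvec n D σ) := fun σ => funext (hL σ)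
  have hLc : ∀ σ : List (Fin N), Continuous (L σ) := by
    intro σ; rw [hLfun σ]
    fun_prop
  have hLopen : ∀ σ : List (Fin N), IsOpenMap (L σ) := by
    intro σ
    have h2 : L σ = (fun x : Fin d → ℝ => ((n:ℝ) ^ σ.length)⁻¹ • x) ∘
        (fun x => x + cvec n D σ) := by
      funext x; rw [hL]; rfl
    rw [h2]
    exact (isOpenMap_smul₀ (inv_ne_zero (by positivity))).comp (isOpenMap_add_right _)
  -- φ and L preserve E
  have hφE : ∀ j y, y ∈ E → φ j y ∈ E := by
    intro j y hy
    have : φ j y ∈ ⋃ j, φ j '' E := mem_iUnion.2 ⟨j, mem_image_of_mem _ hy⟩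
    rwa [← hE] at this
  have hLE : ∀ (σ : List (Fin N)) y, y ∈ E → L σ y ∈ E := by
    intro σ
    induction σ with
    | nil => exact fun y hy => hy
    | cons j τ ih => exact fun y hy => hφE j _ (ih y hy)
  -- decomposition of points of E
  have hEdec : ∀ (m : ℕ) x, x ∈ E → ∃ τ : List (Fin N), τ.length = m ∧ ∃ y ∈ E, x = L τ y := by
    intro m
    induction m with
    | zero => exact fun x hx => ⟨[], rfl, x, hx, rfl⟩
    | succ m ih =>
      intro x hx
      have hx' : x ∈ ⋃ j, φ j '' E := by rwa [← hE]
      obtain ⟨j, hj⟩ := mem_iUnion.1 hx'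
      obtain ⟨y', hy', rfl⟩ := hj
      obtain ⟨τ, hτ, y, hy, rfl⟩ := ih y' hy'
      exact ⟨j :: τ, by simp [hτ], y, hy, rfl⟩
  -- E is bounded
  obtain ⟨R, hR⟩ := hEc.isBounded.exists_norm_le
  -- E ⊆ Q
  have htendR : Filter.Tendsto (fun m : ℕ => R / (n:ℝ)^m) Filter.atTop (nhds 0) := by
    have h0 : (0:ℝ) ≤ (n:ℝ)⁻¹ := by positivity
    have h1 : (n:ℝ)⁻¹ < 1 := by
      rw [inv_lt_one_iff₀]; right; exact hn1
    have := (tendsto_pow_atTop_nhds_zero_of_lt_one h0 h1).const_mul R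
    rw [mul_zero] at this
    convert this using 2 with m
    rw [inv_pow, div_eq_mul_inv]
  have hEQ : E ⊆ Q := by
    intro x hx i
    have hbound : ∀ m : ℕ, -(R / (n:ℝ)^m) ≤ x i ∧ x i ≤ 1 + R / (n:ℝ)^m := by
      intro m
      obtain ⟨τ, hτl, y, hy, hxy⟩ := hEdec m x hx
      obtain ⟨c, hc, hc'⟩ := hcnat τ i
      have hval : x i = ((n:ℝ)^m)⁻¹ * (y i + c) := by
        rw [hxy, hL]
        simp [Pi.smul_apply, Pi.add_apply, smul_eq_mul, hc, hτl]
      have hyi : |y i| ≤ R := by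
        have h2 := norm_le_pi_norm y i
        rw [Real.norm_eq_abs] at h2
        exact h2.trans (hR y hy)
      have hpow : (0:ℝ) < (n:ℝ)^m := by positivity
      have ha : (0:ℝ) < ((n:ℝ)^m)⁻¹ := by positivity
      have hcle : (c:ℝ) + 1 ≤ (n:ℝ)^m := by
        have h3 : c + 1 ≤ n ^ m := by rw [← hτl]; omega
        exact_mod_cast h3
      have hcnn : (0:ℝ) ≤ (c:ℝ) := Nat.cast_nonneg c
      have han : ((n:ℝ)^m)⁻¹ * (n:ℝ)^m = 1 := inv_mul_cancel₀ (ne_of_gt hpow)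
      obtain ⟨hy1, hy2⟩ := abs_le.1 hyi
      constructor
      · rw [hval, div_eq_mul_inv]
        nlinarith [mul_nonneg ha.le (show (0:ℝ) ≤ y i + ↑c + R from by linarith)]
      · rw [hval, div_eq_mul_inv]
        nlinarith [han, mul_nonneg ha.le
          (show (0:ℝ) ≤ R + (n:ℝ)^m - 1 - y i - ↑c from by linarith)]
    constructor
    · have := le_of_tendsto htendR.neg
        (Filter.Eventually.of_forall (fun m => (hbound m).1))
      rwa [neg_zero] at this
    · have h1 : Filter.Tendsto (fun m : ℕ => 1 + R / (n:ℝ)^m) Filter.atTop (nhds 1) := by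
        have := htendR.const_add 1
        rwa [add_zero] at this
      exact ge_of_tendsto h1 (Filter.Eventually.of_forall (fun m => (hbound m).2))
  -- E is contained in every approximation
  have hEsub : ∀ m, E ⊆ Eapprox m := by
    intro m x hx
    obtain ⟨τ, hτ, y, hy, rfl⟩ := hEdec m x hx
    rw [hEapprox]
    exact mem_iUnion.2 ⟨τ, mem_iUnion.2 ⟨hτ, mem_image_of_mem _ (hEQ hy)⟩⟩
  -- approximations lie in Q
  have hAQ : ∀ m, Eapprox m ⊆ Q := by
    intro m x hx
    rw [hEapprox] at hx
    simp only [mem_iUnion] at hx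
    obtain ⟨σ, hσ, y, hy, rfl⟩ := hx
    exact hLQ σ y hy
  -- recursion for approximations and compactness
  have hφc : ∀ j, Continuous (φ j) := by
    intro j
    have h2 : φ j = fun x => (n:ℝ)⁻¹ • (x + D j) := funext (hφ j)
    rw [h2]
    fun_prop
  have hArec0 : Eapprox 0 = Q := by
    rw [hEapprox]
    ext x
    simp only [mem_iUnion]
    constructor
    · rintro ⟨σ, hσ, y, hy, rfl⟩
      have hσ' : σ = [] := List.length_eq_zero_iff.mp hσ
      subst hσ'; exact hy
    · intro hx; exact ⟨[], rfl, x, hx, rfl⟩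
  have hArec : ∀ m, Eapprox (m+1) = ⋃ j, φ j '' Eapprox m := by
    intro m
    ext x
    simp only [hEapprox, mem_iUnion, mem_image]
    constructor
    · rintro ⟨σ, hσ, y, hy, rfl⟩
      cases σ with
      | nil => simp at hσ
      | cons j τ =>
        exact ⟨j, L τ y, ⟨τ, by simpa using hσ, y, hy, rfl⟩, rfl⟩
    · rintro ⟨j, z, ⟨τ, hτ, y, hy, rfl⟩, rfl⟩
      exact ⟨j :: τ, by simp [hτ], y, hy, rfl⟩
  have hAcomp : ∀ m, IsCompact (Eapprox m) := by
    intro m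
    induction m with
    | zero => rw [hArec0]; exact hQcomp
    | succ m ih => rw [hArec m]; exact isCompact_iUnion (fun j => ih.image (hφc j))
  -- island processing
  obtain ⟨x0, hx0, hU⟩ := hUcomp
  have hA : IsCompact (Eapprox k) := hAcomp k
  haveI : CompactSpace (Eapprox k) := isCompact_iff_compactSpace.mp hA
  have hUsub : U ⊆ Eapprox k := hU ▸ connectedComponentIn_subset _ _
  have hUint : U ⊆ interior Q := by
    intro y hy
    have hyQ : y ∈ Q := hAQ k (hUsub hy)
    have hyf : y ∉ frontier Q := fun h =>
      (eq_empty_iff_forall_notMem.mp hUisland y) ⟨hy, h⟩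
    rw [hQclosed.frontier_eq] at hyf
    by_contra h
    exact hyf ⟨hyQ, h⟩
  set x0' : Eapprox k := ⟨x0, hx0⟩ with hx0'def
  have hccim : U = Subtype.val '' connectedComponent x0' := by
    rw [hU]; exact connectedComponentIn_eq_image hx0
  have hccsub : connectedComponent x0' ⊆ Subtype.val ⁻¹' interior Q := by
    intro z hz
    exact hUint (hccim ▸ mem_image_of_mem _ hz)
  obtain ⟨V', hV'clopen, hx0V', hV'sub⟩ := exists_isClopen_subset_of_cc_subset
    (isOpen_interior.preimage continuous_subtype_val) hccsub
  set V : Set (Fin d → ℝ) := Subtype.val '' V' with hVdef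
  have hVA : V ⊆ Eapprox k := by rintro _ ⟨z, hz, rfl⟩; exact z.2
  have hVint : V ⊆ interior Q := by rintro _ ⟨z, hz, rfl⟩; exact hV'sub hz
  have hVcomp : IsCompact V := hV'clopen.isClosed.isCompact.image continuous_subtype_val
  have hUV : U ⊆ V := by
    rw [hccim]
    exact image_mono (hV'clopen.connectedComponent_subset hx0V')
  obtain ⟨O0, hO0open, hO0⟩ := isOpen_induced_iff.mp hV'clopen.isOpen
  set O : Set (Fin d → ℝ) := O0 ∩ interior Q with hOdef
  have hOopen : IsOpen O := hO0open.inter isOpen_interior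
  have hOint : O ⊆ interior Q := inter_subset_right
  have hVO : V = O ∩ Eapprox k := by
    have hVeq : V = Eapprox k ∩ O0 := by
      rw [hVdef, ← hO0]
      exact Subtype.image_preimage_coe _ _
    ext x
    constructor
    · intro hx
      exact ⟨⟨(hVeq ▸ hx).2, hVint hx⟩, (hVeq ▸ hx).1⟩
    · rintro ⟨⟨h1, _⟩, h2⟩
      rw [hVeq]; exact ⟨h2, h1⟩
  -- a cell inside V
  have hx0' : x0 ∈ Eapprox k := hx0
  rw [hEapprox] at hx0'
  simp only [mem_iUnion] at hx0'
  obtain ⟨σ0, hσ0len, hx0cell⟩ := hx0'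
  have hcellV : L σ0 '' Q ⊆ V := by
    have hconn : IsPreconnected (L σ0 '' Q) := hQpc.image _ (hLc σ0).continuousOn
    have hsubA : L σ0 '' Q ⊆ Eapprox k := by
      rw [hEapprox]
      exact fun y hy => mem_iUnion.2 ⟨σ0, mem_iUnion.2 ⟨hσ0len, hy⟩⟩
    have h4 := hconn.subset_connectedComponentIn hx0cell hsubA
    exact h4.trans (hU ▸ hUV)
  -- the fixed point of the cell map
  have hnk1 : (1:ℝ) < (n:ℝ)^k := one_lt_pow₀ hn1 hk.ne'
  have hnk0 : (0:ℝ) < (n:ℝ)^k := lt_trans one_pos hnk1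
  set c0 : Fin d → ℝ := cvec n D σ0 with hc0def
  set xstar : Fin d → ℝ := ((n:ℝ)^k - 1)⁻¹ • c0 with hxstardef
  have hfix : L σ0 xstar = xstar := by
    rw [hL, hσ0len, hxstardef]
    have h1 : (n:ℝ)^k - 1 ≠ 0 := ne_of_gt (by linarith)
    have h2 : (n:ℝ)^k ≠ 0 := ne_of_gt hnk0
    match_scalars <;> field_simp <;> ring
  have hfixiter : ∀ m, L (wordIter σ0 m) xstar = xstar := by
    intro m
    induction m with
    | zero => rfl
    | succ m ih => rw [wordIter, hLapp, ih, hfix]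
  have hlenIter : ∀ m, (wordIter σ0 m).length = k * m := by
    intro m
    induction m with
    | zero => simp [wordIter]
    | succ m ih => rw [wordIter, List.length_append, ih, hσ0len]; ring
  -- difference formula and norm estimate
  have hdiff : ∀ (σ : List (Fin N)) y z,
      L σ y - L σ z = ((n:ℝ) ^ σ.length)⁻¹ • (y - z) := by
    intro σ y z
    rw [hL, hL, ← smul_sub]
    congr 1
    abel
  have hnormdiff : ∀ (σ : List (Fin N)) y z,
      ‖L σ y - L σ z‖ = ((n:ℝ) ^ σ.length)⁻¹ * ‖y - z‖ := by
    intro σ y z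
    rw [hdiff, norm_smul, Real.norm_eq_abs, abs_of_nonneg (by positivity)]
  -- xstar belongs to E
  obtain ⟨y0, hy0⟩ := hEne
  have hr0 : (0:ℝ) ≤ ((n:ℝ)^k)⁻¹ := by positivity
  have hr1 : ((n:ℝ)^k)⁻¹ < 1 := by
    rw [inv_lt_one_iff₀]; right; exact hnk1
  have hxE : xstar ∈ E := by
    have htend : Filter.Tendsto (fun m => L (wordIter σ0 m) y0) Filter.atTop (nhds xstar) := by
      rw [tendsto_iff_norm_sub_tendsto_zero]
      apply squeeze_zero (fun m => norm_nonneg _)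
        (g := fun m => (((n:ℝ)^k)⁻¹)^m * ‖y0 - xstar‖)
      · intro m
        have h5 : L (wordIter σ0 m) y0 - xstar
            = L (wordIter σ0 m) y0 - L (wordIter σ0 m) xstar := by rw [hfixiter]
        rw [h5, hnormdiff, hlenIter]
        apply le_of_eq
        congr 1
        rw [pow_mul, ← inv_pow]
      · have := (tendsto_pow_atTop_nhds_zero_of_lt_one hr0 hr1).mul_const ‖y0 - xstar‖
        rwa [zero_mul] at this
    exact hEc.isClosed.mem_of_tendsto htend
      (Filter.Eventually.of_forall (fun m => hLE _ y0 hy0))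
  have hxQ : xstar ∈ Q := hEQ hxE
  have hxV : xstar ∈ V := hcellV ⟨xstar, hxQ, hfix⟩
  -- rigidity
  have hrigid : ∀ (τ ρ : List (Fin N)), τ.length = ρ.length → ∀ y z,
      y ∈ Q → z ∈ interior Q → L τ y = L ρ z → y = z := by
    intro τ ρ hlen y z hy hz heq
    rw [hL, hL, hlen] at heq
    have hpow : (0:ℝ) < (n:ℝ) ^ ρ.length := by positivity
    have heq2 : y + cvec n D τ = z + cvec n D ρ := by
      have h6 := congrArg (fun w => ((n:ℝ) ^ ρ.length) • w) heq
      simpa [smul_smul, mul_inv_cancel₀ (ne_of_gt hpow)] using h6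
    funext i
    have hi := congrFun heq2 i
    simp only [Pi.add_apply] at hi
    obtain ⟨m1, hm1, -⟩ := hcnat τ i
    obtain ⟨m2, hm2, -⟩ := hcnat ρ i
    rw [hm1, hm2] at hi
    have hz' : z i ∈ Ioo (0:ℝ) 1 := (hQint z).1 hz i
    have hy' := hy i
    rcases Nat.lt_trichotomy m1 m2 with h | h | h
    · exfalso
      have h7 : (m1:ℝ) + 1 ≤ m2 := by exact_mod_cast h
      have := hz'.1
      have := hy'.2
      linarith
    · have h7 : (m1:ℝ) = m2 := by exact_mod_cast h
      linarith
    · exfalso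
      have h7 : (m2:ℝ) + 1 ≤ m1 := by exact_mod_cast h
      have := hz'.2
      have := hy'.1
      linarith
  -- the key open/closed identity
  have hWeq : ∀ m : ℕ, E ∩ L (wordIter σ0 m) '' O = E ∩ L (wordIter σ0 m) '' V := by
    intro m
    apply subset_antisymm
    · rintro x ⟨hxE', w, hwO, hwx⟩
      obtain ⟨τ, hτlen, y, hyE, hyx⟩ := hEdec ((wordIter σ0 m).length) x hxE'
      have hyw : y = w := by
        apply hrigid τ (wordIter σ0 m) hτlen y w (hEQ hyE) (hOint hwO)
        rw [← hyx, hwx]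
      have hwV : w ∈ V := by
        rw [hVO]
        exact ⟨hwO, hEsub k (hyw ▸ hyE)⟩
      exact ⟨hxE', w, hwV, hwx⟩
    · rintro x ⟨h1, w, hw, h2⟩
      have hwO : w ∈ O := by rw [hVO] at hw; exact hw.1
      exact ⟨h1, w, hwO, h2⟩
  -- the component of xstar in E is contained in every scaled copy of V
  have hcompsub : ∀ m : ℕ, connectedComponentIn E xstar ⊆ L (wordIter σ0 m) '' V := by
    intro m
    have hclopen : IsClopen ((Subtype.val : E → (Fin d → ℝ)) ⁻¹'
        (L (wordIter σ0 m) '' V)) := by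
      constructor
      · exact ((hVcomp.image (hLc _)).isClosed).preimage continuous_subtype_val
      · have hpre : (Subtype.val : E → (Fin d → ℝ)) ⁻¹' (L (wordIter σ0 m) '' V)
            = Subtype.val ⁻¹' (L (wordIter σ0 m) '' O) := by
          ext z
          simp only [mem_preimage]
          constructor
          · intro h
            have h8 : (z : Fin d → ℝ) ∈ E ∩ L (wordIter σ0 m) '' V := ⟨z.2, h⟩
            rw [← hWeq m] at h8
            exact h8.2
          · intro h
            have h8 : (z : Fin d → ℝ) ∈ E ∩ L (wordIter σ0 m) '' O := ⟨z.2, h⟩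
            rw [hWeq m] at h8
            exact h8.2
        rw [hpre]
        exact (hLopen _ _ hOopen).preimage continuous_subtype_val
    have hxmem : (⟨xstar, hxE⟩ : E) ∈ (Subtype.val : E → (Fin d → ℝ)) ⁻¹'
        (L (wordIter σ0 m) '' V) := by
      simp only [mem_preimage]
      exact ⟨xstar, hxV, hfixiter m⟩
    have h9 := hclopen.connectedComponent_subset hxmem
    rw [connectedComponentIn_eq_image hxE]
    rintro _ ⟨z, hz, rfl⟩
    exact h9 hz
  -- conclusion
  refine ⟨xstar, hxE, ?_⟩
  apply Subset.antisymm
  · intro x hx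
    have hbound : ∀ m : ℕ, ‖x - xstar‖ ≤ (((n:ℝ)^k)⁻¹)^m := by
      intro m
      obtain ⟨u, huV, hux⟩ := hcompsub m hx
      have huQ : u ∈ Q := interior_subset (hVint huV)
      have hnorm1 : ‖u - xstar‖ ≤ 1 := by
        rw [pi_norm_le_iff_of_nonneg zero_le_one]
        intro i
        have h10 := huQ i
        have h11 := hxQ i
        rw [Pi.sub_apply, Real.norm_eq_abs, abs_le]
        constructor <;> [linarith [h10.1, h11.2]; linarith [h10.2, h11.1]]
      have h12 : x - xstar = L (wordIter σ0 m) u - L (wordIter σ0 m) xstar := by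
        rw [hfixiter, hux]
      rw [h12, hnormdiff, hlenIter, pow_mul, ← inv_pow]
      calc (((n:ℝ)^k)⁻¹)^m * ‖u - xstar‖ ≤ (((n:ℝ)^k)⁻¹)^m * 1 :=
            mul_le_mul_of_nonneg_left hnorm1 (by positivity)
        _ = (((n:ℝ)^k)⁻¹)^m := mul_one _
    rcases eq_or_ne x xstar with h | h
    · exact h
    · exfalso
      have hpos : 0 < ‖x - xstar‖ := by
        rw [norm_pos_iff]
        exact sub_ne_zero.2 h
      obtain ⟨m, hm⟩ := exists_pow_lt_of_lt_one hpos hr1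
      exact absurd (hbound m) (not_le.2 hm)
  · rw [singleton_subset_iff]
    exact mem_connectedComponentIn hxE
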